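/- For a p-biased random walk with p > 1/2, P(T ≥ t) ≤ 2√p(√p + √q)(4pq)^{t/2} for every nonnegative integer t, where T is the last time the walk visits its bottommost point and q = 1-p. -/

import Mathlib

open MeasureTheory ProbabilityTheory


namespace BiasedWalkAux

def stp (b : Bool) : ℤ := if b then 1 else -1

def ps (w : ℕ → Bool) (s : ℕ) : ℤ := ∑ i ∈ Finset.range s, stp (w i)

def Nm (w : ℕ → Bool) : ℕ → ℤ
  | 0 => 0
  | t+1 => min (Nm w t) (ps w (t+1))

noncomputable def wtF (p q : ℝ) (n : ℕ) (w : ℕ → Bool) : ℝ :=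
  ∏ i ∈ Finset.range n, (if w i then p else q)

def consF (b : Bool) (w : ℕ → Bool) : ℕ → Bool
  | 0 => b
  | i+1 => w i

def appF (t : ℕ) (w₁ w₂ : ℕ → Bool) : ℕ → Bool :=
  fun i => if i < t then w₁ i else w₂ (i - t)

def extF {n : ℕ} (v : Fin n → Bool) : ℕ → Bool :=
  fun i => if h : i < n then v ⟨i, h⟩ else false

lemma ps_zero (w : ℕ → Bool) : ps w 0 = 0 := by simp [ps]

lemma ps_cons (b : Bool) (w : ℕ → Bool) (s : ℕ) :
    ps (consF b w) (s+1) = stp b + ps w s := by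
  simp only [ps, Finset.sum_range_succ']
  rw [add_comm]
  rfl

lemma Nm_nonpos (w : ℕ → Bool) (t : ℕ) : Nm w t ≤ 0 := by
  induction t with
  | zero => simp [Nm]
  | succ t ih => exact le_trans (min_le_left _ _) ih

lemma le_Nm_iff (w : ℕ → Bool) (t : ℕ) (c : ℤ) :
    c ≤ Nm w t ↔ ∀ u ≤ t, c ≤ ps w u := by
  induction t with
  | zero =>
      simp only [Nm]
      constructor
      · intro h u hu
        interval_cases u
        · simpa [ps_zero] using h
      · intro h; simpa [ps_zero] using h 0 (le_refl 0)
  | succ t ih =>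
      simp only [Nm, le_min_iff, ih]
      constructor
      · rintro ⟨h1, h2⟩ u hu
        rcases Nat.lt_or_ge u (t+1) with h | h
        · exact h1 u (Nat.lt_succ_iff.mp h)
        · have : u = t + 1 := le_antisymm hu h
          simpa [this] using h2
      · intro h
        exact ⟨fun u hu => h u (le_trans hu (Nat.le_succ t)), h (t+1) le_rfl⟩

lemma Nm_le_ps (w : ℕ → Bool) {u t : ℕ} (hu : u ≤ t) : Nm w t ≤ ps w u :=
  (le_Nm_iff w t (Nm w t)).mp le_rfl u hu

lemma Nm_cons (b : Bool) (w : ℕ → Bool) (t : ℕ) :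
    Nm (consF b w) (t+1) = min 0 (stp b + Nm w t) := by
  induction t with
  | zero =>
      simp [Nm, ps_cons, ps_zero]
  | succ t ih =>
      show min (Nm (consF b w) (t+1)) (ps (consF b w) (t+2)) = _
      rw [ih, ps_cons]
      have : Nm w (t+1) = min (Nm w t) (ps w (t+1)) := rfl
      rw [this]
      rcases le_total (Nm w t) (ps w (t+1)) with h | h <;>
        rcases le_total (stp b + Nm w t) 0 with h2 <;> omega

lemma wtF_cons (p q : ℝ) (n : ℕ) (b : Bool) (w : ℕ → Bool) :
    wtF p q (n+1) (consF b w) = (if b then p else q) * wtF p q n w := by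
  simp only [wtF, Finset.prod_range_succ']
  rw [mul_comm]
  rfl

lemma wtF_nonneg {p q : ℝ} (hp : 0 ≤ p) (hq : 0 ≤ q) (n : ℕ) (w : ℕ → Bool) :
    0 ≤ wtF p q n w := by
  apply Finset.prod_nonneg
  intro i _
  split <;> assumption

lemma extF_cons {n : ℕ} (v : Fin (n+1) → Bool) :
    extF v = consF (v 0) (extF (Fin.tail v)) := by
  funext i
  cases i with
  | zero => simp [extF, consF]
  | succ j =>
      show (if h : j+1 < n+1 then v ⟨j+1, h⟩ else false) = extF (Fin.tail v) j
      by_cases h : j < n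
      · rw [dif_pos (Nat.succ_lt_succ h)]
        simp only [extF, dif_pos h]
        rfl
      · rw [dif_neg (fun hh => h (Nat.lt_of_succ_lt_succ hh))]
        simp only [extF, dif_neg h]

lemma sum_ext_succ {M : Type*} [AddCommMonoid M] (n : ℕ) (F : (ℕ → Bool) → M) :
    ∑ v : Fin (n+1) → Bool, F (extF v)
      = ∑ b : Bool, ∑ v : Fin n → Bool, F (consF b (extF v)) := by
  have h := Fintype.sum_equiv (Fin.consEquiv (fun _ : Fin (n+1) => Bool)).symm (fun v => F (extF v))
    (fun bv => F (consF bv.1 (extF bv.2))) (fun v => by rw [extF_cons v]; rfl)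
  rw [h, Fintype.sum_prod_type]

lemma sum_wtF_one {p q : ℝ} (hpq : p + q = 1) (n : ℕ) :
    ∑ v : Fin n → Bool, wtF p q n (extF v) = 1 := by
  induction n with
  | zero => simp [wtF]
  | succ n ih =>
      rw [sum_ext_succ n (wtF p q (n+1))]
      simp only [wtF_cons, ← Finset.mul_sum]
      rw [Fintype.sum_bool]
      simp only [ih, mul_one, if_true]
      simp only [Bool.false_eq_true, if_false]
      exact hpq

section Bounds
set_option linter.unusedSectionVars false
variable {p q : ℝ} (hp : 1/2 < p) (hq : 0 < q) (hpq : p + q = 1)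

noncomputable def xv (p q : ℝ) : ℝ := Real.sqrt (q/p)

include hp hq hpq

lemma hp0 : (0:ℝ) < p := by linarith
lemma hqp : q ≤ p := by linarith
lemma xv_pos : 0 < xv p q := Real.sqrt_pos.mpr (div_pos hq (by linarith))
lemma xv_le_one : xv p q ≤ 1 := by
  rw [show (1:ℝ) = Real.sqrt 1 by simp [Real.sqrt_one]]
  apply Real.sqrt_le_sqrt
  rw [div_le_one (by linarith : (0:ℝ) < p)]
  linarith
lemma xv_sq : (xv p q)^2 = q / p :=
  Real.sq_sqrt (le_of_lt (div_pos hq (by linarith)))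

lemma key_alg (k : ℕ) :
    p * (xv p q)^(2*(k+2)) + q * (xv p q)^(2*k) = (xv p q)^(2*(k+1)) := by
  have hx2 := xv_sq hp hq hpq
  have h1 : (xv p q)^(2*(k+2)) = ((xv p q)^2)^2 * (xv p q)^(2*k) := by ring
  have h2 : (xv p q)^(2*(k+1)) = (xv p q)^2 * (xv p q)^(2*k) := by ring
  rw [h1, h2, hx2]
  have hp0 : (p:ℝ) ≠ 0 := by positivity
  have key : p * (q/p)^2 + q = q/p := by
    field_simp
    linear_combination hpq
  calc p * ((q/p)^2 * (xv p q)^(2*k)) + q * (xv p q)^(2*k)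
      = (p * (q/p)^2 + q) * (xv p q)^(2*k) := by ring
    _ = q/p * (xv p q)^(2*k) := by rw [key]

lemma px_eq : p * xv p q = Real.sqrt (p*q) := by
  rw [xv, show p * Real.sqrt (q/p) = Real.sqrt (p^2) * Real.sqrt (q/p) by
    rw [Real.sqrt_sq (by linarith : (0:ℝ) ≤ p)], ← Real.sqrt_mul (by positivity)]
  congr 1
  field_simp

lemma qxinv_eq : q * (xv p q)⁻¹ = Real.sqrt (p*q) := by
  rw [xv, ← Real.sqrt_inv]
  rw [show q * Real.sqrt (q/p)⁻¹ = Real.sqrt (q^2) * Real.sqrt (q/p)⁻¹ by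
    rw [Real.sqrt_sq (le_of_lt hq)], ← Real.sqrt_mul (by positivity)]
  congr 1
  field_simp

lemma pxsq_le : p * (xv p q)^2 ≤ Real.sqrt (p*q) := by
  rw [xv_sq hp hq hpq]
  have : p * (q/p) = q := by field_simp
  rw [this]
  calc q = Real.sqrt (q*q) := by rw [Real.sqrt_mul_self (le_of_lt hq)]
    _ ≤ Real.sqrt (p*q) := Real.sqrt_le_sqrt (by nlinarith)



def hitP (R m : ℕ) (w : ℕ → Bool) : Prop := ∃ r ≤ R, ps w r ≤ -(m:ℤ)

omit hp hq hpq in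
lemma hitP_cons {m : ℕ} (hm : 1 ≤ m) (R : ℕ) (b : Bool) (w : ℕ → Bool) :
    hitP (R+1) m (consF b w) ↔ hitP R (if b then m+1 else m-1) w := by
  constructor
  · rintro ⟨r, hr, h⟩
    cases r with
    | zero =>
        exfalso
        rw [ps_zero] at h
        omega
    | succ r' =>
        refine ⟨r', by omega, ?_⟩
        rw [ps_cons] at h
        cases b <;> simp only [stp, if_true, Bool.false_eq_true, if_false] at h ⊢ <;> push_cast at h ⊢ <;> omega
  · rintro ⟨r, hr, h⟩
    refine ⟨r+1, by omega, ?_⟩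
    rw [ps_cons]
    cases b <;> simp only [stp, if_true, Bool.false_eq_true, if_false] at h ⊢ <;> push_cast at h ⊢ <;> omega

open Classical in
lemma hit_sum_le : ∀ R m : ℕ,
    (∑ v : Fin R → Bool, if hitP R m (extF v) then wtF p q R (extF v) else 0)
      ≤ (xv p q)^(2*m) := by
  intro R
  induction R with
  | zero =>
      intro m
      rw [Fintype.sum_unique]
      by_cases hm : m = 0
      · subst hm
        rw [if_pos ⟨0, le_rfl, by rw [ps_zero]; simp⟩]
        simp [wtF]
      · rw [if_neg]
        · exact pow_nonneg (le_of_lt (xv_pos hp hq hpq)) _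
        · rintro ⟨r, hr, h⟩
          interval_cases r
          rw [ps_zero] at h
          omega
  | succ R ih =>
      intro m
      cases m with
      | zero =>
          have h1 : ∀ v : Fin (R+1) → Bool, (if hitP (R+1) 0 (extF v) then wtF p q (R+1) (extF v) else 0) = wtF p q (R+1) (extF v) := by
            intro v
            rw [if_pos ⟨0, by omega, by rw [ps_zero]; simp⟩]
          simp only [h1]
          rw [sum_wtF_one hpq]
          simp
      | succ k =>
          rw [sum_ext_succ R (fun w => if hitP (R+1) (k+1) w then wtF p q (R+1) w else 0)]
          have hsplit : ∀ b, ∀ v : Fin R → Bool,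
              (if hitP (R+1) (k+1) (consF b (extF v)) then wtF p q (R+1) (consF b (extF v)) else 0)
              = (if b then p else q) * (if hitP R (if b then k+2 else k) (extF v) then wtF p q R (extF v) else 0) := by
            intro b v
            rw [hitP_cons (m := k+1) (by omega), wtF_cons]
            cases b with
            | false =>
                simp only [Bool.false_eq_true, if_false]
                rw [show k+1-1 = k from rfl]
                split <;> ring
            | true =>
                simp only [if_true]
                rw [show k+1+1 = k+2 from rfl]
                split <;> ring
          simp only [Fintype.sum_bool]
          rw [Finset.sum_congr rfl (fun v _ => hsplit true v),
              Finset.sum_congr rfl (fun v _ => hsplit false v),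
              ← Finset.mul_sum, ← Finset.mul_sum]
          simp only [if_true, Bool.false_eq_true, if_false]
          have h2 := ih (k+2)
          have h3 := ih k
          have hle : p * (∑ v : Fin R → Bool, if hitP R (k+2) (extF v) then wtF p q R (extF v) else 0)
              + q * (∑ v : Fin R → Bool, if hitP R k (extF v) then wtF p q R (extF v) else 0)
              ≤ p * (xv p q)^(2*(k+2)) + q * (xv p q)^(2*k) := by
            have hsn : ∀ m, (0:ℝ) ≤ (∑ v : Fin R → Bool, if hitP R m (extF v) then wtF p q R (extF v) else 0) := by
              intro m
              apply Finset.sum_nonneg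
              intro v _
              split
              · exact wtF_nonneg (by linarith) (le_of_lt hq) _ _
              · exact le_rfl
            apply add_le_add
            · exact mul_le_mul_of_nonneg_left h2 (by linarith)
            · exact mul_le_mul_of_nonneg_left h3 (le_of_lt hq)
          calc _ ≤ p * (xv p q)^(2*(k+2)) + q * (xv p q)^(2*k) := hle
            _ = (xv p q)^(2*(k+1)) := key_alg hp hq hpq k

include hp hq hpq in
lemma step_bound (S N : ℤ) (hN : N ≤ 0) :
    p * (xv p q)^(2*(1 + S) - min 0 (1 + N)) + q * (xv p q)^(2*(-1 + S) - min 0 (-1 + N))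
      ≤ (2 * Real.sqrt (p*q)) * (xv p q)^(2*S - N) := by
  have hx0 : 0 < xv p q := xv_pos hp hq hpq
  have hxne : xv p q ≠ 0 := ne_of_gt hx0
  have hx1 : xv p q ≤ 1 := xv_le_one hp hq hpq
  set x := xv p q with hxdef
  set e : ℤ := 2*S - N with hedef
  have hxe : (0:ℝ) < x^e := zpow_pos hx0 e
  have hF : 2*(-1+S) - min 0 (-1+N) = e - 1 := by
    rw [min_eq_right (by omega : (-1+N : ℤ) ≤ 0)]
    omega
  have claim2 : q * x^(e-1) = Real.sqrt (p*q) * x^e := by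
    rw [zpow_sub_one₀ hxne]
    calc q * (x^e * x⁻¹) = (q * x⁻¹) * x^e := by ring
      _ = Real.sqrt (p*q) * x^e := by rw [qxinv_eq hp hq hpq]
  have claim1 : p * x^(2*(1 + S) - min 0 (1 + N)) ≤ Real.sqrt (p*q) * x^e := by
    rcases le_or_gt (1 + N) 0 with h | h
    · have hT : 2*(1+S) - min 0 (1+N) = e + 1 := by
        rw [min_eq_right h]; omega
      rw [hT, zpow_add_one₀ hxne]
      refine le_of_eq ?_
      rw [← px_eq hp hq hpq]
      ring
    · have hN0 : N = 0 := by omega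
      have hT : 2*(1+S) - min 0 (1 + N) = e + 2 := by
        rw [min_eq_left (by omega : (0:ℤ) ≤ 1 + N)]; omega
      rw [hT]
      have h2 : x^(e+2) = x^e * x^2 := by
        rw [zpow_add₀ hxne, show (x:ℝ)^(2:ℤ) = x^2 from by norm_cast]
      rw [h2]
      calc p * (x^e * x^2) = (p * x^2) * x^e := by ring
        _ ≤ Real.sqrt (p*q) * x^e :=
            mul_le_mul_of_nonneg_right (pxsq_le hp hq hpq) (le_of_lt hxe)
  calc p * x^(2*(1 + S) - min 0 (1 + N)) + q * x^(2*(-1+S) - min 0 (-1+N))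
      ≤ Real.sqrt (p*q) * x^e + Real.sqrt (p*q) * x^e := by
        rw [hF, claim2]
        exact add_le_add_left claim1 _
    _ = (2 * Real.sqrt (p*q)) * x^e := by ring

include hp hq hpq in
lemma main_sum_le : ∀ t : ℕ,
    (∑ v : Fin t → Bool, wtF p q t (extF v) * (xv p q)^(2 * ps (extF v) t - Nm (extF v) t))
      ≤ (2 * Real.sqrt (p*q))^t := by
  intro t
  induction t with
  | zero =>
      rw [Fintype.sum_unique]
      simp [wtF, ps, Nm]
  | succ t ih =>
      rw [sum_ext_succ t (fun w => wtF p q (t+1) w * (xv p q)^(2 * ps w (t+1) - Nm w (t+1)))]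
      rw [Fintype.sum_bool]
      have hterm : ∀ b : Bool, ∀ v : Fin t → Bool,
          wtF p q (t+1) (consF b (extF v)) * (xv p q)^(2 * ps (consF b (extF v)) (t+1) - Nm (consF b (extF v)) (t+1))
          = (if b then p else q) * wtF p q t (extF v)
              * (xv p q)^(2 * (stp b + ps (extF v) t) - min 0 (stp b + Nm (extF v) t)) := by
        intro b v
        rw [wtF_cons, ps_cons, Nm_cons]
      rw [Finset.sum_congr rfl (fun v _ => hterm true v),
          Finset.sum_congr rfl (fun v _ => hterm false v)]
      rw [← Finset.sum_add_distrib]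
      have hpoint : ∀ v : Fin t → Bool,
          (if true then p else q) * wtF p q t (extF v)
              * (xv p q)^(2 * (stp true + ps (extF v) t) - min 0 (stp true + Nm (extF v) t))
          + (if false then p else q) * wtF p q t (extF v)
              * (xv p q)^(2 * (stp false + ps (extF v) t) - min 0 (stp false + Nm (extF v) t))
          ≤ (2 * Real.sqrt (p*q)) * (wtF p q t (extF v) * (xv p q)^(2 * ps (extF v) t - Nm (extF v) t)) := by
        intro v
        have hw0 : 0 ≤ wtF p q t (extF v) := wtF_nonneg (by linarith) (le_of_lt hq) _ _
        have hb := step_bound hp hq hpq (ps (extF v) t) (Nm (extF v) t) (Nm_nonpos _ _)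
        simp only [if_true, Bool.false_eq_true, if_false, stp]
        calc p * wtF p q t (extF v) * (xv p q)^(2 * (1 + ps (extF v) t) - min 0 (1 + Nm (extF v) t))
            + q * wtF p q t (extF v) * (xv p q)^(2 * (-1 + ps (extF v) t) - min 0 (-1 + Nm (extF v) t))
            = wtF p q t (extF v) * (p * (xv p q)^(2*(1 + ps (extF v) t) - min 0 (1 + Nm (extF v) t))
              + q * (xv p q)^(2*(-1 + ps (extF v) t) - min 0 (-1 + Nm (extF v) t))) := by ring
          _ ≤ wtF p q t (extF v) * ((2 * Real.sqrt (p*q)) * (xv p q)^(2 * ps (extF v) t - Nm (extF v) t)) :=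
              mul_le_mul_of_nonneg_left hb hw0
          _ = (2 * Real.sqrt (p*q)) * (wtF p q t (extF v) * (xv p q)^(2 * ps (extF v) t - Nm (extF v) t)) := by ring
      calc _ ≤ ∑ v : Fin t → Bool, (2 * Real.sqrt (p*q)) * (wtF p q t (extF v) * (xv p q)^(2 * ps (extF v) t - Nm (extF v) t)) :=
            Finset.sum_le_sum (fun v _ => hpoint v)
        _ = (2 * Real.sqrt (p*q)) * ∑ v : Fin t → Bool, wtF p q t (extF v) * (xv p q)^(2 * ps (extF v) t - Nm (extF v) t) := by
            rw [Finset.mul_sum]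
        _ ≤ (2 * Real.sqrt (p*q)) * (2 * Real.sqrt (p*q))^t :=
            mul_le_mul_of_nonneg_left ih (by positivity)
        _ = (2 * Real.sqrt (p*q))^(t+1) := by rw [pow_succ]; ring

omit hp hq hpq in
lemma ps_appF_le (t : ℕ) (w₁ w₂ : ℕ → Bool) {u : ℕ} (hu : u ≤ t) :
    ps (appF t w₁ w₂) u = ps w₁ u := by
  apply Finset.sum_congr rfl
  intro i hi
  rw [Finset.mem_range] at hi
  have : i < t := lt_of_lt_of_le hi hu
  simp [appF, this]

omit hp hq hpq in
lemma ps_appF_add (t : ℕ) (w₁ w₂ : ℕ → Bool) (r : ℕ) :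
    ps (appF t w₁ w₂) (t + r) = ps w₁ t + ps w₂ r := by
  rw [ps, Finset.sum_range_add]
  congr 1
  · exact ps_appF_le t w₁ w₂ le_rfl
  · apply Finset.sum_congr rfl
    intro j _
    have h1 : ¬ (t + j < t) := by omega
    simp [appF, h1]

omit hp hq hpq in
lemma Nm_congr (w w' : ℕ → Bool) (t : ℕ) (h : ∀ u ≤ t, ps w u = ps w' u) :
    Nm w t = Nm w' t := by
  induction t with
  | zero => rfl
  | succ t ih =>
      show min (Nm w t) (ps w (t+1)) = min (Nm w' t) (ps w' (t+1))
      rw [ih (fun u hu => h u (le_trans hu (Nat.le_succ t))), h (t+1) le_rfl]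

omit hp hq hpq in
lemma wtF_appF (t R : ℕ) (w₁ w₂ : ℕ → Bool) :
    wtF p q (t + R) (appF t w₁ w₂) = wtF p q t w₁ * wtF p q R w₂ := by
  rw [wtF, Finset.prod_range_add]
  congr 1
  · apply Finset.prod_congr rfl
    intro i hi
    rw [Finset.mem_range] at hi
    simp [appF, hi]
  · apply Finset.prod_congr rfl
    intro j _
    have h1 : ¬ (t + j < t) := by omega
    simp [appF, h1]

omit hp hq hpq in
lemma extF_append {t R : ℕ} (v₁ : Fin t → Bool) (v₂ : Fin R → Bool) :
    extF (Fin.append v₁ v₂) = appF t (extF v₁) (extF v₂) := by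
  funext i
  by_cases h1 : i < t
  · have h2 : i < t + R := by omega
    have he : (⟨i, h2⟩ : Fin (t+R)) = Fin.castAdd R ⟨i, h1⟩ := by
      apply Fin.ext; simp
    rw [extF, dif_pos h2, he, Fin.append_left]
    simp [appF, h1, extF]
  · by_cases h2 : i < t + R
    · have h3 : i - t < R := by omega
      have he : (⟨i, h2⟩ : Fin (t+R)) = Fin.natAdd t ⟨i - t, h3⟩ := by
        apply Fin.ext; simp; omega
      rw [extF, dif_pos h2, he, Fin.append_right]
      simp [appF, h1, extF, h3]
    · have h3 : ¬ (i - t < R) := by omega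
      rw [extF, dif_neg h2]
      simp [appF, h1, extF, h3]

omit hp hq hpq in
lemma sum_ext_append {M : Type*} [AddCommMonoid M] (t R : ℕ) (F : (ℕ → Bool) → M) :
    ∑ v : Fin (t+R) → Bool, F (extF v)
      = ∑ v₁ : Fin t → Bool, ∑ v₂ : Fin R → Bool, F (appF t (extF v₁) (extF v₂)) := by
  have hbij : Function.Bijective
      (fun vw : (Fin t → Bool) × (Fin R → Bool) => Fin.append vw.1 vw.2) := by
    rw [Function.bijective_iff_has_inverse]
    refine ⟨fun v => (v ∘ Fin.castAdd R, v ∘ Fin.natAdd t), ?_, ?_⟩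
    · rintro ⟨a, b⟩
      refine Prod.ext ?_ ?_ <;> funext j
      · exact Fin.append_left a b j
      · exact Fin.append_right a b j
    · intro v
      funext i
      refine Fin.addCases ?_ ?_ i
      · intro j; exact Fin.append_left _ _ j
      · intro j; exact Fin.append_right _ _ j
  have h := Fintype.sum_bijective _ hbij
      (fun vw : (Fin t → Bool) × (Fin R → Bool) => F (appF t (extF vw.1) (extF vw.2)))
      (fun v : Fin (t+R) → Bool => F (extF v))
      (fun vw => by rw [extF_append])
  rw [← h, Fintype.sum_prod_type]

def PT (t n : ℕ) (w : ℕ → Bool) : Prop :=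
  ∃ s, t ≤ s ∧ s ≤ n ∧ ∀ u ≤ t, ps w s ≤ ps w u

omit hp hq hpq in
lemma PT_iff_hit (t R : ℕ) (w₁ w₂ : ℕ → Bool) :
    PT t (t+R) (appF t w₁ w₂) ↔ hitP R (ps w₁ t - Nm w₁ t).toNat w₂ := by
  have hSN : 0 ≤ ps w₁ t - Nm w₁ t := sub_nonneg.mpr (Nm_le_ps w₁ le_rfl)
  have hcast : ((ps w₁ t - Nm w₁ t).toNat : ℤ) = ps w₁ t - Nm w₁ t := Int.toNat_of_nonneg hSN
  constructor
  · rintro ⟨s, hts, hsn, hall⟩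
    obtain ⟨r, rfl⟩ : ∃ r, s = t + r := ⟨s - t, by omega⟩
    refine ⟨r, by omega, ?_⟩
    have h1 : ∀ u ≤ t, ps w₁ t + ps w₂ r ≤ ps w₁ u := by
      intro u hu
      have := hall u hu
      rwa [ps_appF_add, ps_appF_le t w₁ w₂ hu] at this
    have h2 : ps w₁ t + ps w₂ r ≤ Nm w₁ t := (le_Nm_iff w₁ t _).mpr h1
    rw [hcast]
    omega
  · rintro ⟨r, hr, h⟩
    rw [hcast] at h
    refine ⟨t + r, by omega, by omega, ?_⟩
    intro u hu
    rw [ps_appF_add, ps_appF_le t w₁ w₂ hu]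
    have := Nm_le_ps w₁ hu
    omega

include hp hq hpq in
open Classical in
theorem comb_main (t R : ℕ) :
    (∑ v : Fin (t+R) → Bool, if PT t (t+R) (extF v) then wtF p q (t+R) (extF v) else 0)
      ≤ (2 * Real.sqrt (p*q))^t := by
  have hx0 : 0 < xv p q := xv_pos hp hq hpq
  have hx1 : xv p q ≤ 1 := xv_le_one hp hq hpq
  rw [sum_ext_append t R (fun w => if PT t (t+R) w then wtF p q (t+R) w else 0)]
  have hinner : ∀ v₁ : Fin t → Bool,
      (∑ v₂ : Fin R → Bool, if PT t (t+R) (appF t (extF v₁) (extF v₂))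
          then wtF p q (t+R) (appF t (extF v₁) (extF v₂)) else 0)
      ≤ wtF p q t (extF v₁) * (xv p q)^(2 * ps (extF v₁) t - Nm (extF v₁) t) := by
    intro v₁
    have hw1 : 0 ≤ wtF p q t (extF v₁) := wtF_nonneg (by linarith) (le_of_lt hq) _ _
    set m : ℕ := (ps (extF v₁) t - Nm (extF v₁) t).toNat with hm
    have hstep : (∑ v₂ : Fin R → Bool, if PT t (t+R) (appF t (extF v₁) (extF v₂))
          then wtF p q (t+R) (appF t (extF v₁) (extF v₂)) else 0)
        = wtF p q t (extF v₁) * (∑ v₂ : Fin R → Bool, if hitP R m (extF v₂)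
            then wtF p q R (extF v₂) else 0) := by
      rw [Finset.mul_sum]
      apply Finset.sum_congr rfl
      intro v₂ _
      rw [wtF_appF]
      by_cases h : PT t (t+R) (appF t (extF v₁) (extF v₂))
      · rw [if_pos h, if_pos ((PT_iff_hit t R _ _).mp h)]
      · rw [if_neg h, if_neg (fun hh => h ((PT_iff_hit t R _ _).mpr hh)), mul_zero]
    rw [hstep]
    have h1 := hit_sum_le hp hq hpq R m
    have h2 : (xv p q : ℝ)^(2*m) ≤ (xv p q)^(2 * ps (extF v₁) t - Nm (extF v₁) t) := by
      have hSN : 0 ≤ ps (extF v₁) t - Nm (extF v₁) t := sub_nonneg.mpr (Nm_le_ps _ le_rfl)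
      have hN0 : Nm (extF v₁) t ≤ 0 := Nm_nonpos _ _
      have hcast : ((xv p q : ℝ))^(2*m) = (xv p q)^((2*m : ℕ) : ℤ) := by
        rw [zpow_natCast]
      rw [hcast]
      apply zpow_le_zpow_right_of_le_one₀ hx0 hx1
      have : ((2*m : ℕ) : ℤ) = 2 * (ps (extF v₁) t - Nm (extF v₁) t) := by
        push_cast [hm, Int.toNat_of_nonneg hSN]
        ring
      omega
    calc wtF p q t (extF v₁) * (∑ v₂ : Fin R → Bool, if hitP R m (extF v₂)
            then wtF p q R (extF v₂) else 0)
        ≤ wtF p q t (extF v₁) * (xv p q)^(2*m) := mul_le_mul_of_nonneg_left h1 hw1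
      _ ≤ wtF p q t (extF v₁) * (xv p q)^(2 * ps (extF v₁) t - Nm (extF v₁) t) :=
          mul_le_mul_of_nonneg_left h2 hw1
  calc _ ≤ ∑ v₁ : Fin t → Bool, wtF p q t (extF v₁) * (xv p q)^(2 * ps (extF v₁) t - Nm (extF v₁) t) :=
        Finset.sum_le_sum (fun v₁ _ => hinner v₁)
    _ ≤ (2 * Real.sqrt (p*q))^t := main_sum_le hp hq hpq t

end Bounds
end BiasedWalkAux


open BiasedWalkAux

/-- For a `p`-biased random walk with `p > 1/2`,
`P(T ≥ t) ≤ 2√p(√p + √q)(4pq)^{t/2}` for every `t : ℕ`, where `T` is the last time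
the walk visits its bottommost point and `q = 1-p`. -/
theorem biased_walk_tail_last_min' {Ω : Type*} [MeasurableSpace Ω] (μ : Measure Ω)
    [IsProbabilityMeasure μ] (p q : ℝ) (hp : 1 / 2 < p) (hp1 : p ≤ 1) (hq : q = 1 - p)
    (Z : ℕ → Ω → ℤ) (hmeas : ∀ i, Measurable (Z i))
    (hindep : iIndepFun Z μ)
    (hup : ∀ i, μ {ω | Z i ω = 1} = ENNReal.ofReal p)
    (hdown : ∀ i, μ {ω | Z i ω = -1} = ENNReal.ofReal q)
    (S : Ω → ℕ → ℤ) (hS : ∀ ω t, S ω t = ∑ i ∈ Finset.range t, Z i ω)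
    (B : Ω → ℤ) (hB : ∀ ω, B ω = sInf (Set.range (S ω)))
    (T : Ω → ℕ) (hT : ∀ ω, T ω = sSup {t : ℕ | S ω t = B ω}) (t : ℕ) :
    μ {ω | t ≤ T ω} ≤ ENNReal.ofReal
      (2 * Real.sqrt p * (Real.sqrt p + Real.sqrt q) * (4 * p * q) ^ ((t : ℝ) / 2)) := by
  classical
  have hp0 : (0:ℝ) < p := by linarith
  have hq0 : (0:ℝ) ≤ q := by rw [hq]; linarith
  have hsp : Real.sqrt p * Real.sqrt p = p := Real.mul_self_sqrt (le_of_lt hp0)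
  have hC1 : (1:ℝ) ≤ 2 * Real.sqrt p * (Real.sqrt p + Real.sqrt q) := by
    nlinarith [Real.sqrt_nonneg p, Real.sqrt_nonneg q]
  -- case t = 0
  rcases Nat.eq_zero_or_pos t with ht0 | ht1
  · subst ht0
    calc μ {ω | 0 ≤ T ω} ≤ 1 := prob_le_one
      _ ≤ _ := by
          rw [show ((0:ℕ):ℝ)/2 = (0:ℝ) by norm_num, Real.rpow_zero, mul_one]
          rw [show (1 : ENNReal) = ENNReal.ofReal 1 by simp]
          exact ENNReal.ofReal_le_ofReal hC1
  -- case q = 0 (p = 1)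
  rcases eq_or_lt_of_le hq0 with hq' | hq'
  · have hp1' : p = 1 := by rw [hq] at hq'; linarith
    have hnull : ∀ i, μ {ω | Z i ω ≠ 1} = 0 := by
      intro i
      have hms : MeasurableSet {ω | Z i ω = 1} := (hmeas i) (by trivial : MeasurableSet ({1} : Set ℤ))
      have h1 : μ {ω | Z i ω = 1} = 1 := by rw [hup i, hp1']; simp
      have := measure_compl hms (measure_ne_top μ _)
      rw [h1, measure_univ, tsub_self] at this
      exact this
    have hsub : {ω | t ≤ T ω} ⊆ ⋃ i, {ω | Z i ω ≠ 1} := by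
      intro ω hω
      by_contra hb
      simp only [Set.mem_iUnion, Set.mem_setOf_eq, not_exists, not_not] at hb
      have hSs : ∀ s, S ω s = (s:ℤ) := by
        intro s
        rw [hS]
        rw [Finset.sum_congr rfl (fun i _ => hb i)]
        simp
      have hBω : B ω = 0 := by
        rw [hB]
        apply le_antisymm
        · have hS00 : S ω 0 = 0 := by rw [hSs 0]; norm_num
          have hm0 : (0:ℤ) ∈ Set.range (S ω) := hS00 ▸ Set.mem_range_self 0
          have hbdd : BddBelow (Set.range (S ω)) := by
            refine ⟨0, ?_⟩
            rintro y ⟨s, rfl⟩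
            rw [hSs s]
            positivity
          exact csInf_le hbdd hm0
        · apply le_csInf (Set.range_nonempty (S ω))
          rintro y ⟨s, rfl⟩
          rw [hSs s]
          positivity
      have hTω : T ω = 0 := by
        rw [hT]
        have : {s : ℕ | S ω s = B ω} = {0} := by
          ext s
          simp only [Set.mem_setOf_eq, Set.mem_singleton_iff, hSs s, hBω]
          exact ⟨fun h => by exact_mod_cast h, fun h => by simp [h]⟩
        rw [this, csSup_singleton]
      rw [Set.mem_setOf_eq, hTω] at hω
      omega
    calc μ {ω | t ≤ T ω} ≤ μ (⋃ i, {ω | Z i ω ≠ 1}) := measure_mono hsub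
      _ = 0 := measure_iUnion_null hnull
      _ ≤ _ := zero_le
  -- main case
  have hpq : p + q = 1 := by rw [hq]; ring
  set x := xv p q with hxdef
  -- basic measurability
  have hSm : ∀ s : ℕ, Measurable (fun ω => S ω s) := by
    intro s
    have : (fun ω => S ω s) = fun ω => ∑ i ∈ Finset.range s, Z i ω := by
      funext ω; exact hS ω s
    rw [this]
    exact Finset.measurable_sum _ (fun i _ => hmeas i)
  have hle_meas : ∀ s u : ℕ, MeasurableSet {ω | S ω s ≤ S ω u} := by
    intro s u
    have : {ω | S ω s ≤ S ω u}
        = (fun ω => (S ω s, S ω u)) ⁻¹' {x : ℤ × ℤ | x.1 ≤ x.2} := rfl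
    rw [this]
    exact ((hSm s).prodMk (hSm u)) ((Set.to_countable _).measurableSet)
  -- the approximating events
  set G : ℕ → Set Ω := fun R => {ω | ∃ s, t ≤ s ∧ s ≤ t + R ∧ ∀ u ≤ t, S ω s ≤ S ω u} with hGdef
  have hGm : ∀ R, MeasurableSet (G R) := by
    intro R
    have : G R = ⋃ s ∈ Finset.Icc t (t+R), ⋂ u ∈ Finset.range (t+1), {ω | S ω s ≤ S ω u} := by
      ext ω
      simp only [hGdef, Set.mem_setOf_eq, Set.mem_iUnion, Set.mem_iInter, Finset.mem_Icc,
        Finset.mem_range, Nat.lt_succ_iff]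
      constructor
      · rintro ⟨s, h1, h2, h3⟩; exact ⟨s, ⟨h1, h2⟩, fun u hu => h3 u hu⟩
      · rintro ⟨s, ⟨h1, h2⟩, h3⟩; exact ⟨s, h1, h2, fun u hu => h3 u hu⟩
    rw [this]
    exact Finset.measurableSet_biUnion _ (fun s _ =>
      Finset.measurableSet_biInter _ (fun u _ => hle_meas s u))
  have hGmono : Monotone G := by
    intro R R' hR ω
    rintro ⟨s, h1, h2, h3⟩
    exact ⟨s, h1, by omega, h3⟩
  -- bad set
  set Bad : Set Ω := ⋃ i, {ω | ¬ (Z i ω = 1 ∨ Z i ω = -1)} with hBaddef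
  have hBadnull : μ Bad = 0 := by
    apply measure_iUnion_null
    intro i
    have hms1 : MeasurableSet {ω | Z i ω = 1} := (hmeas i) (by trivial : MeasurableSet ({1} : Set ℤ))
    have hms2 : MeasurableSet {ω | Z i ω = -1} := (hmeas i) (by trivial : MeasurableSet ({-1} : Set ℤ))
    have hdisj : Disjoint {ω | Z i ω = 1} {ω | Z i ω = -1} := by
      rw [Set.disjoint_left]
      rintro ω h1 h2
      rw [Set.mem_setOf_eq] at h1 h2
      omega
    have hun : μ ({ω | Z i ω = 1} ∪ {ω | Z i ω = -1}) = 1 := by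
      rw [measure_union hdisj hms2, hup i, hdown i, ← ENNReal.ofReal_add (le_of_lt hp0) hq0, hpq]
      simp
    have : {ω | ¬ (Z i ω = 1 ∨ Z i ω = -1)} = ({ω | Z i ω = 1} ∪ {ω | Z i ω = -1})ᶜ := by
      ext ω; simp [Set.mem_union]
    rw [this]
    have := measure_compl (hms1.union hms2) (measure_ne_top μ _)
    rw [hun, measure_univ] at this
    simpa using this
  -- |S| ≤ s for good omega
  have habs : ∀ ω, ω ∉ Bad → ∀ s : ℕ, |S ω s| ≤ (s:ℤ) := by
    intro ω hω s
    simp only [hBaddef, Set.mem_iUnion, Set.mem_setOf_eq, not_exists, not_not] at hω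
    rw [hS]
    calc |∑ i ∈ Finset.range s, Z i ω| ≤ ∑ i ∈ Finset.range s, |Z i ω| :=
          Finset.abs_sum_le_sum_abs _ _
      _ = ∑ i ∈ Finset.range s, 1 := by
          apply Finset.sum_congr rfl
          intro i _
          rcases hω i with h | h <;> rw [h] <;> norm_num
      _ = (s:ℤ) := by simp
  -- inclusion
  have hincl : {ω | t ≤ T ω} ⊆ (⋃ R, G R) ∪ Bad := by
    intro ω hω
    by_cases hb : ω ∈ Bad
    · exact Or.inr hb
    refine Or.inl ?_
    rw [Set.mem_iUnion]
    by_cases hbb : BddBelow (Set.range (S ω))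
    · set A := {s : ℕ | S ω s = B ω} with hAdef
      have hA1 : A.Nonempty := by
        by_contra hA
        rw [Set.not_nonempty_iff_eq_empty] at hA
        have : T ω = 0 := by
          rw [hT, show {s : ℕ | S ω s = B ω} = A from rfl, hA]
          exact csSup_empty
        rw [Set.mem_setOf_eq, this] at hω
        omega
      have hA2 : BddAbove A := by
        by_contra hA
        have : T ω = 0 := by
          rw [hT, show {s : ℕ | S ω s = B ω} = A from rfl, csSup_of_not_bddAbove hA]
          exact csSup_empty
        rw [Set.mem_setOf_eq, this] at hω
        omega
      have hTA : S ω (T ω) = B ω := by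
        have := Nat.sSup_mem hA1 hA2
        rwa [← hT] at this
      refine ⟨T ω - t, T ω, hω, by omega, ?_⟩
      intro u hu
      rw [hTA, hB]
      exact csInf_le hbb ⟨u, rfl⟩
    · have hne : (Finset.range (t+1)).Nonempty := ⟨0, by simp⟩
      set c : ℤ := (Finset.range (t+1)).inf' hne (fun u => S ω u) with hcdef
      obtain ⟨y, ⟨s, rfl⟩, hy⟩ := (not_bddBelow_iff.mp hbb) (c - t - 1)
      have hc0 : c ≤ 0 := by
        have h1 : c ≤ S ω 0 := Finset.inf'_le _ (by simp)
        have h2 : S ω 0 = 0 := by rw [hS]; simp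
        omega
      have hs_ge : t ≤ s := by
        have := abs_le.mp (habs ω hb s)
        omega
      refine ⟨s - t, s, hs_ge, by omega, ?_⟩
      intro u hu
      have : c ≤ S ω u := Finset.inf'_le _ (by simp; omega)
      omega
  -- the per-R bound
  have hkey : ∀ R : ℕ, μ (G R) ≤ ENNReal.ofReal ((2 * Real.sqrt (p*q))^t) := by
    intro R
    set n := t + R with hndef
    -- cylinders
    set Cyl : (Fin n → Bool) → Set Ω := fun v => ⋂ i : Fin n, {ω | Z i ω = stp (v i)} with hCyldef
    -- on a cylinder, S matches ps
    have hmatch : ∀ v : Fin n → Bool, ∀ ω ∈ Cyl v, ∀ s ≤ n, S ω s = ps (extF v) s := by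
      intro v ω hωv s hs
      rw [hS, ps]
      apply Finset.sum_congr rfl
      intro i hi
      rw [Finset.mem_range] at hi
      have hin : i < n := lt_of_lt_of_le hi hs
      have h1 : Z i ω = stp (v ⟨i, hin⟩) := by
        have := Set.mem_iInter.mp hωv ⟨i, hin⟩
        exact this
      rw [h1]
      congr 1
      simp [extF, hin]
    -- measure of a cylinder
    have hCylmeas : ∀ v : Fin n → Bool,
        μ (Cyl v) = ENNReal.ofReal (wtF p q n (extF v)) := by
      intro v
      have h1 : Cyl v = ⋂ i ∈ Finset.range n, (Z i) ⁻¹' {stp (extF v i)} := by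
        ext ω
        simp only [hCyldef, Set.mem_iInter, Set.mem_setOf_eq, Finset.mem_range,
          Set.mem_preimage, Set.mem_singleton_iff]
        constructor
        · intro h i hi
          rw [show extF v i = v ⟨i, hi⟩ by simp [extF, hi]]
          exact h ⟨i, hi⟩
        · intro h j
          have := h j.1 j.2
          rwa [show extF v j.1 = v j by simp [extF, j.2, Fin.eta]] at this
      rw [h1]
      rw [hindep.meas_biInter (fun i _ => ⟨{stp (extF v i)}, by trivial, rfl⟩)]
      have h2 : ∀ i, μ ((Z i) ⁻¹' {stp (extF v i)})
          = ENNReal.ofReal (if extF v i then p else q) := by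
        intro i
        cases hvi : extF v i
        · simp only [stp, Bool.false_eq_true, if_false]
          exact hdown i
        · simp only [stp, if_true]
          exact hup i
      rw [Finset.prod_congr rfl (fun i _ => h2 i)]
      rw [← ENNReal.ofReal_prod_of_nonneg]
      · rfl
      · intro i _
        split <;> [exact le_of_lt hp0; exact hq0]
    -- covering G R by cylinders
    have hcover : G R ⊆ (⋃ v : Fin n → Bool, G R ∩ Cyl v) ∪ Bad := by
      intro ω hω
      by_cases hb : ω ∈ Bad
      · exact Or.inr hb
      refine Or.inl ?_
      rw [Set.mem_iUnion]
      have hgood : ∀ i, Z i ω = 1 ∨ Z i ω = -1 := by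
        intro i
        by_contra hcon
        exact hb (Set.mem_iUnion.mpr ⟨i, hcon⟩)
      refine ⟨fun i => decide (Z i ω = 1), hω, ?_⟩
      rw [hCyldef]
      apply Set.mem_iInter.mpr
      intro i
      rcases hgood i with h | h
      · simp [Set.mem_setOf_eq, h, stp]
      · have : ¬ (Z i ω = 1) := by omega
        simp [Set.mem_setOf_eq, h, stp, this]
    -- per-cylinder bound
    have hcylbound : ∀ v : Fin n → Bool,
        μ (G R ∩ Cyl v) ≤ if PT t n (extF v) then ENNReal.ofReal (wtF p q n (extF v)) else 0 := by
      intro v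
      by_cases hPT : PT t n (extF v)
      · rw [if_pos hPT, ← hCylmeas v]
        exact measure_mono Set.inter_subset_right
      · rw [if_neg hPT]
        have : G R ∩ Cyl v = ∅ := by
          rw [Set.eq_empty_iff_forall_notMem]
          rintro ω ⟨hωG, hωC⟩
          obtain ⟨s, h1, h2, h3⟩ := hωG
          apply hPT
          refine ⟨s, h1, h2, ?_⟩
          intro u hu
          rw [← hmatch v ω hωC s h2, ← hmatch v ω hωC u (by omega)]
          exact h3 u hu
        rw [this]
        simp
    calc μ (G R) ≤ μ ((⋃ v : Fin n → Bool, G R ∩ Cyl v) ∪ Bad) := measure_mono hcover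
      _ ≤ μ (⋃ v : Fin n → Bool, G R ∩ Cyl v) + μ Bad := measure_union_le _ _
      _ = μ (⋃ v : Fin n → Bool, G R ∩ Cyl v) := by rw [hBadnull, add_zero]
      _ ≤ ∑' v : Fin n → Bool, μ (G R ∩ Cyl v) := measure_iUnion_le _
      _ = ∑ v : Fin n → Bool, μ (G R ∩ Cyl v) := tsum_fintype _
      _ ≤ ∑ v : Fin n → Bool, (if PT t n (extF v) then ENNReal.ofReal (wtF p q n (extF v)) else 0) :=
          Finset.sum_le_sum (fun v _ => hcylbound v)
      _ = ∑ v : Fin n → Bool, ENNReal.ofReal (if PT t n (extF v) then wtF p q n (extF v) else 0) := by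
          apply Finset.sum_congr rfl
          intro v _
          by_cases h : PT t n (extF v) <;> simp [h]
      _ = ENNReal.ofReal (∑ v : Fin n → Bool, if PT t n (extF v) then wtF p q n (extF v) else 0) := by
          rw [ENNReal.ofReal_sum_of_nonneg]
          intro v _
          split
          · exact wtF_nonneg (le_of_lt hp0) hq0 _ _
          · exact le_rfl
      _ ≤ ENNReal.ofReal ((2 * Real.sqrt (p*q))^t) := by
          apply ENNReal.ofReal_le_ofReal
          exact comb_main hp hq' hpq t R
  -- assemble
  have hchain : μ {ω | t ≤ T ω} ≤ ENNReal.ofReal ((2 * Real.sqrt (p*q))^t) := by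
    calc μ {ω | t ≤ T ω} ≤ μ ((⋃ R, G R) ∪ Bad) := measure_mono hincl
      _ ≤ μ (⋃ R, G R) + μ Bad := measure_union_le _ _
      _ = μ (⋃ R, G R) := by rw [hBadnull, add_zero]
      _ = ⨆ R, μ (G R) := (hGmono.directed_le).measure_iUnion
      _ ≤ ENNReal.ofReal ((2 * Real.sqrt (p*q))^t) := iSup_le hkey
  refine le_trans hchain (ENNReal.ofReal_le_ofReal ?_)
  -- (2 sqrt(pq))^t = (4pq)^(t/2), and constant ≥ 1
  have h4 : (0:ℝ) ≤ 4*p*q := by positivity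
  have hrw : (4*p*q) ^ ((t:ℝ)/2) = (2 * Real.sqrt (p*q))^t := by
    have h1 : ((t:ℝ)/2) = (1/2 : ℝ) * (t:ℝ) := by ring
    rw [h1, Real.rpow_mul h4, Real.rpow_natCast]
    congr 1
    rw [show (4*p*q : ℝ) = (2:ℝ)^2 * (p*q) by ring, ← Real.sqrt_eq_rpow,
        Real.sqrt_mul (by positivity), Real.sqrt_sq (by norm_num)]
  rw [hrw]
  nlinarith [pow_nonneg (by positivity : (0:ℝ) ≤ 2 * Real.sqrt (p*q)) t, hC1,
    mul_le_mul_of_nonneg_right hC1 (pow_nonneg (by positivity : (0:ℝ) ≤ 2 * Real.sqrt (p*q)) t)]
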